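/- Let G be a (δ−2)-fault Hamiltonian graph with minimum degree δ ≥ 3, and let F be a set of vertices and edges of G with |F| = δ−1. Suppose there exists a set S of vertices of G − F such that the number of isolated vertices of G − (F ∪ S) is at least |S| + 1. Then the vertex set of G − (F ∪ S) is an independent set of size (|G| + |F_E| − δ)/2 + 1, where F_E is the set of edges in F. -/

import Mathlib

open scoped Classical

/-- A fractional perfect matching of `G`: a weight function on edges with values in
`[0,1]`, vanishing off the edge set, whose weights around each vertex sum to `1`. -/
def HasFPM {V : Type*} [Fintype V] (G : SimpleGraph V) : Prop :=
  ∃ f : Sym2 V → ℝ, (∀ e, 0 ≤ f e ∧ f e ≤ 1) ∧ (∀ e, e ∉ G.edgeSet → f e = 0) ∧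
    ∀ v : V, (∑ e : Sym2 V, if v ∈ e then f e else 0) = 1
/-- The graph obtained from `G` by deleting the vertices in `Fv` and the edges in `Fe`. -/
def delFault {V : Type*} (G : SimpleGraph V) (Fv : Finset V) (Fe : Finset (Sym2 V)) :
    SimpleGraph {v : V // v ∈ ({v : V | v ∉ Fv} : Set V)} :=
  (G.deleteEdges ↑Fe).induce {v : V | v ∉ Fv}

/-- The fractional strong matching preclusion number: the minimum total number of vertices
and edges whose deletion leaves a graph with no fractional perfect matching. -/
noncomputable def fsmp {V : Type*} [Fintype V] (G : SimpleGraph V) : ℕ :=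
  sInf {n | ∃ (Fv : Finset V) (Fe : Finset (Sym2 V)), ↑Fe ⊆ G.edgeSet ∧
    Fv.card + Fe.card = n ∧ ¬ HasFPM (delFault G Fv Fe)}
/-- `G` is `f`-fault Hamiltonian: removing any set of at most `f` vertices and/or edges
leaves a Hamiltonian graph. -/
def FaultHam {V : Type*} [Fintype V] (G : SimpleGraph V) (f : ℕ) : Prop :=
  ∀ (Fv : Finset V) (Fe : Finset (Sym2 V)), ↑Fe ⊆ G.edgeSet →
    Fv.card + Fe.card ≤ f → (delFault G Fv Fe).IsHamiltonian
lemma cycle_struct {W : Type*} [Fintype W] [DecidableEq W] (G' : SimpleGraph W)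
    (h : G'.IsHamiltonian) (hcard : Fintype.card W ≠ 1) :
    ∃ σ : W → W, Function.Injective σ ∧ (∀ x, G'.Adj x (σ x)) ∧
      (∀ x y : W, ∃ n, σ^[n] x = y) ∧ 3 ≤ Fintype.card W := by
  obtain ⟨a, p, hp⟩ := h hcard
  have h3 : 3 ≤ Fintype.card W := by
    have := hp.isCycle.three_le_length
    rwa [hp.length_eq] at this
  set l : List W := p.support.tail with hl_def
  have hnodup : l.Nodup := hp.isCycle.support_nodup
  have hmem : ∀ x : W, x ∈ l := by
    intro x
    have hx := hp.isHamiltonian_tail.mem_support x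
    rwa [SimpleGraph.Walk.support_tail_of_not_nil _ hp.isCycle.not_nil] at hx
  set m := l.length with hm_def
  have hm_pos : 0 < m := List.length_pos_of_mem (hmem a)
  have hidx : ∀ x : W, l.idxOf x < m := fun x => List.idxOf_lt_length_iff.2 (hmem x)
  set σ : W → W := fun x => l.get ⟨(l.idxOf x + 1) % m, Nat.mod_lt _ hm_pos⟩ with hσ_def
  have hget_inj : ∀ i j : Fin m, l.get i = l.get j → i = j :=
    fun i j hij => List.nodup_iff_injective_get.1 hnodup hij
  have hget_idx : ∀ x : W, l.get ⟨l.idxOf x, hidx x⟩ = x := fun x => List.idxOf_get _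
  have hidx_get : ∀ (i : ℕ) (hi : i < m), l.idxOf (l.get ⟨i, hi⟩) = i := by
    intro i hi
    have := hget_inj ⟨l.idxOf (l.get ⟨i, hi⟩), hidx _⟩ ⟨i, hi⟩ (hget_idx _)
    exact congrArg Fin.val this
  have hσget : ∀ (i : ℕ) (hi : i < m), σ (l.get ⟨i, hi⟩) =
      l.get ⟨(i + 1) % m, Nat.mod_lt _ hm_pos⟩ := by
    intro i hi
    simp only [hσ_def, hidx_get i hi]
  have modinj : ∀ i j : ℕ, i < m → j < m → (i + 1) % m = (j + 1) % m → i = j := by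
    intro i j hi hj hij
    rcases Nat.lt_or_ge (i + 1) m with h1 | h1 <;> rcases Nat.lt_or_ge (j + 1) m with h2 | h2
    · rw [Nat.mod_eq_of_lt h1, Nat.mod_eq_of_lt h2] at hij; omega
    · have h2' : j + 1 = m := by omega
      rw [Nat.mod_eq_of_lt h1, h2', Nat.mod_self] at hij; omega
    · have h1' : i + 1 = m := by omega
      rw [h1', Nat.mod_self, Nat.mod_eq_of_lt h2] at hij; omega
    · omega
  have hinj : Function.Injective σ := by
    intro x y hxy
    simp only [hσ_def] at hxy
    have h2 := congrArg Fin.val (hget_inj _ _ hxy)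
    simp only at h2
    have h3 := modinj _ _ (hidx x) (hidx y) h2
    rw [← hget_idx x, ← hget_idx y]
    exact congrArg l.get (Fin.ext h3)
  have hiter : ∀ (k i : ℕ) (hi : i < m),
      σ^[k] (l.get ⟨i, hi⟩) = l.get ⟨(i + k) % m, Nat.mod_lt _ hm_pos⟩ := by
    intro k
    induction k with
    | zero =>
      intro i hi
      simp only [Function.iterate_zero, id_eq]
      congr 1
      exact Fin.ext (by simp [Nat.mod_eq_of_lt hi])
    | succ k ih =>
      intro i hi
      rw [Function.iterate_succ_apply', ih i hi, hσget _ _]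
      congr 1
      exact Fin.ext (by simp [Nat.mod_add_mod, Nat.add_assoc])
  have horb : ∀ x y : W, ∃ n, σ^[n] x = y := by
    intro x y
    obtain ⟨ix, hix, hgx⟩ : ∃ ix, ∃ h : ix < m, l.get ⟨ix, h⟩ = x := ⟨_, hidx x, hget_idx x⟩
    obtain ⟨iy, hiy, hgy⟩ : ∃ iy, ∃ h : iy < m, l.get ⟨iy, h⟩ = y := ⟨_, hidx y, hget_idx y⟩
    refine ⟨(m - ix) + iy, ?_⟩
    rw [← hgx, hiter _ _ hix, ← hgy]
    refine congrArg l.get (Fin.ext ?_)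
    have h1 : ix + ((m - ix) + iy) = m + iy := by omega
    simp only [h1, Nat.add_mod_left, Nat.mod_eq_of_lt hiy]
  have hadj : ∀ x : W, G'.Adj x (σ x) := by
    have hchain := p.isChain_adj_support
    rw [List.isChain_iff_getElem] at hchain
    have hsup : p.support = a :: l := p.support_eq_cons
    have hlen : p.support.length - 1 = m := by rw [hsup]; simp [hm_def]
    have hchain' : ∀ (j : ℕ) (hj : j + 1 < m),
        G'.Adj (l.get ⟨j, by omega⟩) (l.get ⟨j + 1, hj⟩) := by
      intro j hj
      have := hchain (j + 1) (by omega)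
      simpa [hsup] using this
    have hchain0 : G'.Adj a (l.get ⟨0, hm_pos⟩) := by
      have := hchain 0 (by omega)
      simpa [hsup] using this
    intro x
    have hi : l.idxOf x < m := hidx x
    have hx : l.get ⟨l.idxOf x, hi⟩ = x := hget_idx x
    set i := l.idxOf x with hi_def
    rcases Nat.lt_or_ge (i + 1) m with hlt | hge
    · have e2 : σ x = l.get ⟨i + 1, hlt⟩ := by
        rw [← hx, hσget i hi]
        exact congrArg l.get (Fin.ext (Nat.mod_eq_of_lt hlt))
      rw [e2, ← hx]
      exact hchain' i hlt
    · have him : i + 1 = m := by omega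
      have e1 : p.support.getLast? = some a := by
        rw [List.getLast?_eq_getLast p.support_ne_nil, p.getLast_support]
      have e2 : p.support.getLast? = l[m - 1]? := by
        rw [List.getLast?_eq_getElem?, hsup]
        have h4 : (a :: l).length - 1 = (m - 1) + 1 := by
          simp only [List.length_cons]
          omega
        rw [h4, List.getElem?_cons_succ]
      have e3 : l[m - 1]? = some (l.get ⟨m - 1, by omega⟩) := by
        rw [List.getElem?_eq_getElem (show m - 1 < l.length by omega)]
        simp
      have hxa : x = a := by
        have h5 : a = l.get ⟨m - 1, by omega⟩ := by
          have h6 := e1.symm.trans (e2.trans e3)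
          exact Option.some.inj h6
        rw [← hx, h5]
        exact congrArg l.get (Fin.ext (show i = m - 1 by omega))
      have hσx : σ x = l.get ⟨0, hm_pos⟩ := by
        rw [← hx, hσget i hi]
        exact congrArg l.get (Fin.ext (show (i + 1) % m = 0 by rw [him, Nat.mod_self]))
      rw [hσx, hxa]
      exact hchain0
  exact ⟨σ, hinj, hadj, horb, h3⟩


lemma key_lemma {W : Type*} [Fintype W] [DecidableEq W] (σ : W → W)
    (hinj : Function.Injective σ) (horb : ∀ x y : W, ∃ n, σ^[n] x = y)
    (A B EX : Finset W) (hA0 : A.Nonempty)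
    (hA : ∀ x ∈ A, σ x ∈ B ∨ x ∈ EX)
    (hA' : ∀ x ∈ A, ∀ y, σ y = x → y ∈ B ∨ y ∈ EX)
    (hcard : B.card + EX.card ≤ A.card) :
    A.card = B.card + EX.card ∧ ∀ x : W, x ∈ A ∨ x ∈ B := by
  have hmapsto : ∀ x ∈ A \ EX, σ x ∈ B := by
    intro x hx
    rw [Finset.mem_sdiff] at hx
    rcases hA x hx.1 with h | h
    · exact h
    · exact absurd h hx.2
  have hcard1 : (A \ EX).card ≤ B.card :=
    Finset.card_le_card_of_injOn σ hmapsto (hinj.injOn)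
  have hcard2 : A.card ≤ (A \ EX).card + EX.card := Finset.card_le_card_sdiff_add_card
  have h1 : A.card = B.card + EX.card := by omega
  have h2 : (A \ EX).card = B.card := by omega
  have himg : (A \ EX).image σ = B := by
    apply Finset.eq_of_subset_of_card_le
    · intro y hy
      obtain ⟨x, hx, rfl⟩ := Finset.mem_image.1 hy
      exact hmapsto x hx
    · rw [Finset.card_image_of_injOn hinj.injOn, h2]
  have hEXsub : EX ⊆ A := by
    have h3 : (A \ EX).card + (A ∩ EX).card = A.card := by
      rw [Finset.card_sdiff_add_card_inter]
    have h4 : (A ∩ EX).card = EX.card := by omega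
    have h5 : A ∩ EX = EX :=
      Finset.eq_of_subset_of_card_le Finset.inter_subset_right (le_of_eq h4.symm)
    rw [← h5]
    exact Finset.inter_subset_left
  refine ⟨h1, ?_⟩
  by_contra hcon
  push_neg at hcon
  obtain ⟨r, hrA, hrB⟩ := hcon
  have hclosed : ∀ x : W, x ∉ A → x ∉ B → σ x ∉ A ∧ σ x ∉ B := by
    intro x hxA hxB
    constructor
    · intro hσA
      rcases hA' (σ x) hσA x rfl with h | h
      · exact hxB h
      · exact hxA (hEXsub h)
    · intro hσB
      rw [← himg] at hσB
      obtain ⟨y, hy, hyx⟩ := Finset.mem_image.1 hσB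
      cases hinj hyx
      exact hxA (Finset.mem_sdiff.1 hy).1
  obtain ⟨a, ha⟩ := hA0
  obtain ⟨n, hn⟩ := horb r a
  have hiter : ∀ k, σ^[k] r ∉ A ∧ σ^[k] r ∉ B := by
    intro k
    induction k with
    | zero => exact ⟨hrA, hrB⟩
    | succ k ih =>
      rw [Function.iterate_succ_apply']
      exact hclosed _ ih.1 ih.2
  have := hiter n
  rw [hn] at this
  exact this.1 ha

open scoped Classical

lemma no_swap {W : Type*} [Fintype W] (σ : W → W) (horb : ∀ x y : W, ∃ n, σ^[n] x = y)
    (h3 : 3 ≤ Fintype.card W) (y : W) (hswap : σ (σ y) = y) : False := by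
  classical
  obtain ⟨z, hz⟩ : ∃ z : W, z ∉ ({y, σ y} : Finset W) := by
    by_contra h
    push_neg at h
    have h1 : (Finset.univ : Finset W) ⊆ {y, σ y} := fun z _ => h z
    have h2 := Finset.card_le_card h1
    have h3' : ({y, σ y} : Finset W).card ≤ 2 := by
      calc ({y, σ y} : Finset W).card ≤ ({σ y} : Finset W).card + 1 :=
            Finset.card_insert_le _ _
        _ ≤ 2 := by simp
    rw [Finset.card_univ] at h2
    omega
  obtain ⟨n, hn⟩ := horb y z
  have hmem : ∀ k, σ^[k] y ∈ ({y, σ y} : Finset W) := by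
    intro k
    induction k with
    | zero => simp
    | succ k ih =>
      rw [Function.iterate_succ_apply']
      rcases Finset.mem_insert.1 ih with h | h
      · rw [h]; simp
      · rw [Finset.mem_singleton.1 h, hswap]; simp
  have := hmem n
  rw [hn] at this
  exact hz this

lemma card_filter_subtype {V : Type*} [Fintype V] (Q : Set V) [Fintype Q] (T : Finset V)
    (hT : ∀ t ∈ T, t ∈ Q) :
    (Finset.univ.filter (fun x : Q => (x : V) ∈ T)).card = T.card := by
  classical
  apply Finset.card_bij (fun (x : Q) _ => (x : V))
  · intro a ha; exact (Finset.mem_filter.1 ha).2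
  · intro a _ b _ hab; exact Subtype.ext hab
  · intro t ht; exact ⟨⟨t, hT t ht⟩, Finset.mem_filter.2 ⟨Finset.mem_univ _, ht⟩, rfl⟩

lemma card_ne_one_aux {V : Type*} [Fintype V] [Nonempty V] (G : SimpleGraph V)
    [DecidableRel G.Adj] (Fv' : Finset V) (u : V)
    (hu : u ∉ Fv') (hcard : Fv'.card < G.minDegree) :
    Fintype.card {v : V // v ∈ ({v : V | v ∉ Fv'} : Set V)} ≠ 1 := by
  intro h1
  obtain ⟨x, hx⟩ := Fintype.card_eq_one_iff.1 h1
  have hsub : G.neighborFinset u ⊆ Fv' := by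
    intro w hw
    rw [SimpleGraph.mem_neighborFinset] at hw
    by_contra hwF
    have e1 := hx ⟨u, hu⟩
    have e2 := hx ⟨w, hwF⟩
    rw [← e2] at e1
    exact G.ne_of_adj hw (congrArg Subtype.val e1)
  have h2 := G.minDegree_le_degree u
  rw [← SimpleGraph.card_neighborFinset_eq_degree] at h2
  have h3 := Finset.card_le_card hsub
  omega


/-- Let `G` be a `(δ−2)`-fault Hamiltonian graph with minimum degree `δ ≥ 3`, and let
`F = Fv ∪ Fe` be a set of vertices and edges with `|F| = δ−1`.  If there is a vertex set
`S` of `G − F` such that `G − (F ∪ S)` has at least `|S| + 1` isolated vertices, then the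
vertex set of `G − (F ∪ S)` is independent and has exactly `(|G| + |F_E| − δ)/2 + 1`
elements. -/
theorem indep_of_many_isolated {V : Type*} [Fintype V] [Nonempty V] (G : SimpleGraph V)
    (hδ : 3 ≤ G.minDegree) (hham : FaultHam G (G.minDegree - 2))
    (Fv : Finset V) (Fe : Finset (Sym2 V)) (hFe : ↑Fe ⊆ G.edgeSet)
    (hF : Fv.card + Fe.card = G.minDegree - 1)
    (S : Finset V) (hSF : Disjoint S Fv)
    (hiso : S.card + 1 ≤
      (Finset.univ.filter fun v : V => v ∉ Fv ∪ S ∧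
        ∀ w, (G.deleteEdges ↑Fe).Adj v w → w ∈ Fv ∪ S).card) :
    (∀ a b : V, a ∉ Fv ∪ S → b ∉ Fv ∪ S → ¬ (G.deleteEdges ↑Fe).Adj a b) ∧
      2 * ((Fintype.card V : ℤ) - Fv.card - S.card) =
        (Fintype.card V : ℤ) + Fe.card - G.minDegree + 2 := by
  set I : Finset V := Finset.univ.filter (fun v : V => v ∉ Fv ∪ S ∧
      ∀ w, (G.deleteEdges ↑Fe).Adj v w → w ∈ Fv ∪ S) with hI_def
  have hImem : ∀ v : V, v ∈ I ↔ (v ∉ Fv ∪ S ∧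
      ∀ w, (G.deleteEdges ↑Fe).Adj v w → w ∈ Fv ∪ S) := by
    intro v; simp [hI_def]
  have hInotFv : ∀ t ∈ I, t ∉ Fv :=
    fun t ht htFv => ((hImem t).1 ht).1 (Finset.mem_union_left _ htFv)
  have hIpos : 0 < I.card := by omega
  obtain ⟨hIcard, hcover⟩ : I.card = S.card + 1 ∧ ∀ v : V, v ∉ Fv ∪ S → v ∈ I := by
    rcases Finset.eq_empty_or_nonempty Fe with hFe0 | ⟨f0, hf0⟩
    · -- vertex case : remove a vertex v0 from Fv
      have hFecard : Fe.card = 0 := by rw [hFe0]; simp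
      have hFv2 : 2 ≤ Fv.card := by omega
      obtain ⟨v0, hv0⟩ := Finset.card_pos.1 (by omega : 0 < Fv.card)
      have hFv'sub : Fv.erase v0 ⊆ Fv := Finset.erase_subset _ _
      have hFv'card : (Fv.erase v0).card = Fv.card - 1 := Finset.card_erase_of_mem hv0
      have hle : (Fv.erase v0).card + Fe.card ≤ G.minDegree - 2 := by omega
      have ham := hham (Fv.erase v0) Fe hFe hle
      obtain ⟨u0, hu0⟩ := Finset.card_pos.1 hIpos
      have hcW := card_ne_one_aux G (Fv.erase v0) u0
        (fun h => hInotFv u0 hu0 (hFv'sub h)) (by omega)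
      obtain ⟨σ, hσinj, hσadj, hσorb, h3W⟩ := cycle_struct _ ham hcW
      have hadjV : ∀ x : {v : V // v ∈ ({v : V | v ∉ Fv.erase v0} : Set V)},
          (G.deleteEdges ↑Fe).Adj x.val (σ x).val := by
        intro x
        have h := hσadj x
        simpa [delFault] using h
      set A : Finset {v : V // v ∈ ({v : V | v ∉ Fv.erase v0} : Set V)} :=
        Finset.univ.filter (fun x => (x : V) ∈ I) with hA_def
      set B : Finset {v : V // v ∈ ({v : V | v ∉ Fv.erase v0} : Set V)} :=
        Finset.univ.filter (fun x => (x : V) ∈ insert v0 S) with hB_def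
      have hAmem : ∀ x, x ∈ A ↔ (x : V) ∈ I := by intro x; simp [hA_def]
      have hBmem : ∀ x, x ∈ B ↔ (x : V) ∈ insert v0 S := by intro x; simp [hB_def]
      have hAcard : A.card = I.card :=
        card_filter_subtype _ I (fun t ht h => hInotFv t ht (hFv'sub h))
      have hv0S : v0 ∉ S := fun h => (Finset.disjoint_left.1 hSF) h hv0
      have hT : ∀ t ∈ insert v0 S, t ∈ ({v : V | v ∉ Fv.erase v0} : Set V) := by
        intro t ht
        rcases Finset.mem_insert.1 ht with rfl | htS
        · exact Finset.notMem_erase _ _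
        · exact fun h => (Finset.disjoint_left.1 hSF) htS (hFv'sub h)
      have hBcard : B.card = S.card + 1 := by
        rw [hB_def, card_filter_subtype _ _ hT, Finset.card_insert_of_notMem hv0S]
      have hA0 : A.Nonempty := by rw [← Finset.card_pos, hAcard]; omega
      have hstep : ∀ x y : {v : V // v ∈ ({v : V | v ∉ Fv.erase v0} : Set V)},
          (x : V) ∈ I → (G.deleteEdges ↑Fe).Adj (x : V) (y : V) → y ∈ B := by
        intro x y hxI hadj
        have h1 := ((hImem _).1 hxI).2 _ hadj
        rcases Finset.mem_union.1 h1 with h | h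
        · have hy : (y : V) = v0 := by
            by_contra hne
            exact y.2 (Finset.mem_erase.2 ⟨hne, h⟩)
          exact (hBmem y).2 (Finset.mem_insert.2 (Or.inl hy))
        · exact (hBmem y).2 (Finset.mem_insert.2 (Or.inr h))
      obtain ⟨hac, hcov⟩ := key_lemma σ hσinj hσorb A B ∅ hA0
        (fun x hx => Or.inl (hstep x (σ x) ((hAmem x).1 hx) (hadjV x)))
        (fun x hx y hyx => Or.inl (hstep x y ((hAmem x).1 hx) (by
          have h := hadjV y
          rw [hyx] at h
          exact h.symm)))
        (by rw [Finset.card_empty, hAcard, hBcard]; omega)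
      rw [hAcard, hBcard, Finset.card_empty] at hac
      refine ⟨by omega, ?_⟩
      intro v hv
      have hvW : v ∈ ({v : V | v ∉ Fv.erase v0} : Set V) :=
        fun h => hv (Finset.mem_union_left _ (hFv'sub h))
      rcases hcov ⟨v, hvW⟩ with h | h
      · exact (hAmem _).1 h
      · exfalso
        rcases Finset.mem_insert.1 ((hBmem _).1 h) with h1 | h1
        · exact hv (Finset.mem_union_left _ (show v ∈ Fv by
            rw [show v = v0 from h1]; exact hv0))
        · exact hv (Finset.mem_union_right _ h1)
    · -- edge case : remove an edge f0 from Fe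
      have hFe'sub : ↑(Fe.erase f0) ⊆ G.edgeSet :=
        (Finset.coe_subset.2 (Finset.erase_subset _ _)).trans hFe
      have hFe'card : (Fe.erase f0).card = Fe.card - 1 := Finset.card_erase_of_mem hf0
      have hFepos : 1 ≤ Fe.card := Finset.card_pos.2 ⟨f0, hf0⟩
      have hle : Fv.card + (Fe.erase f0).card ≤ G.minDegree - 2 := by omega
      have ham := hham Fv (Fe.erase f0) hFe'sub hle
      obtain ⟨u0, hu0⟩ := Finset.card_pos.1 hIpos
      have hcW := card_ne_one_aux G Fv u0 (hInotFv u0 hu0) (by omega)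
      obtain ⟨σ, hσinj, hσadj, hσorb, h3W⟩ := cycle_struct _ ham hcW
      have hadjV : ∀ x : {v : V // v ∈ ({v : V | v ∉ Fv} : Set V)},
          (G.deleteEdges ↑(Fe.erase f0)).Adj x.val (σ x).val := by
        intro x
        have h := hσadj x
        simpa [delFault] using h
      set A : Finset {v : V // v ∈ ({v : V | v ∉ Fv} : Set V)} :=
        Finset.univ.filter (fun x => (x : V) ∈ I) with hA_def
      set B : Finset {v : V // v ∈ ({v : V | v ∉ Fv} : Set V)} :=
        Finset.univ.filter (fun x => (x : V) ∈ S) with hB_def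
      set EX : Finset {v : V // v ∈ ({v : V | v ∉ Fv} : Set V)} :=
        Finset.univ.filter (fun x => s((x : V), ((σ x : _) : V)) = f0) with hEX_def
      have hAmem : ∀ x, x ∈ A ↔ (x : V) ∈ I := by intro x; simp [hA_def]
      have hBmem : ∀ x, x ∈ B ↔ (x : V) ∈ S := by intro x; simp [hB_def]
      have hEXmem : ∀ x, x ∈ EX ↔ s((x : V), ((σ x : _) : V)) = f0 := by
        intro x; simp [hEX_def]
      have hAcard : A.card = I.card := card_filter_subtype _ I hInotFv
      have hBcard : B.card = S.card :=
        card_filter_subtype _ S (fun t ht h => (Finset.disjoint_left.1 hSF) ht h)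
      have hEXcard : EX.card ≤ 1 := by
        rw [Finset.card_le_one]
        intro x hx y hy
        have hx' := (hEXmem x).1 hx
        have hy' := (hEXmem y).1 hy
        have h := hx'.trans hy'.symm
        rw [Sym2.eq_iff] at h
        rcases h with ⟨h1, _⟩ | ⟨h1, h2⟩
        · exact Subtype.ext h1
        · exfalso
          have e1 : x = σ y := Subtype.ext h1
          have e2 : σ x = y := Subtype.ext h2
          exact no_swap σ hσorb h3W y (by rw [← e1, e2])
      have hA0 : A.Nonempty := by rw [← Finset.card_pos, hAcard]; omega
      have hstep : ∀ x y : {v : V // v ∈ ({v : V | v ∉ Fv} : Set V)},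
          (x : V) ∈ I → (G.deleteEdges ↑(Fe.erase f0)).Adj (x : V) (y : V) →
          y ∈ B ∨ s((x : V), (y : V)) = f0 := by
        intro x y hxI hadj
        rw [SimpleGraph.deleteEdges_adj] at hadj
        by_cases hmem : s((x : V), (y : V)) ∈ Fe
        · right
          by_contra hne
          exact hadj.2 (Finset.mem_coe.2 (Finset.mem_erase.2 ⟨hne, hmem⟩))
        · left
          have hadj2 : (G.deleteEdges ↑Fe).Adj (x : V) (y : V) :=
            SimpleGraph.deleteEdges_adj.2 ⟨hadj.1, fun h => hmem (Finset.mem_coe.1 h)⟩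
          have h1 := ((hImem _).1 hxI).2 _ hadj2
          rcases Finset.mem_union.1 h1 with h | h
          · exact (y.2 h).elim
          · exact (hBmem y).2 h
      obtain ⟨hac, hcov⟩ := key_lemma σ hσinj hσorb A B EX hA0
        (fun x hx => by
          rcases hstep x (σ x) ((hAmem x).1 hx) (hadjV x) with h | h
          · exact Or.inl h
          · exact Or.inr ((hEXmem x).2 h))
        (fun x hx y hyx => by
          have hadj : (G.deleteEdges ↑(Fe.erase f0)).Adj (x : V) (y : V) := by
            have h := hadjV y
            rw [hyx] at h
            exact h.symm
          rcases hstep x y ((hAmem x).1 hx) hadj with h | h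
          · exact Or.inl h
          · refine Or.inr ((hEXmem y).2 ?_)
            rw [hyx, Sym2.eq_swap]
            exact h)
        (by rw [hAcard, hBcard]; omega)
      rw [hAcard, hBcard] at hac
      refine ⟨by omega, ?_⟩
      intro v hv
      have hvW : v ∈ ({v : V | v ∉ Fv} : Set V) := fun h => hv (Finset.mem_union_left _ h)
      rcases hcov ⟨v, hvW⟩ with h | h
      · exact (hAmem _).1 h
      · exact absurd (Finset.mem_union_right _ ((hBmem _).1 h)) hv
  have hindep : ∀ a b : V, a ∉ Fv ∪ S → b ∉ Fv ∪ S → ¬ (G.deleteEdges ↑Fe).Adj a b := by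
    intro a b ha hb hadj
    exact hb (((hImem a).1 (hcover a ha)).2 b hadj)
  refine ⟨hindep, ?_⟩
  have hIeq : Finset.univ \ (Fv ∪ S) = I := by
    apply Finset.ext
    intro v
    simp only [Finset.mem_sdiff, Finset.mem_univ, true_and]
    exact ⟨hcover v, fun hv => ((hImem v).1 hv).1⟩
  have hcount : I.card + (Fv ∪ S).card = Fintype.card V := by
    rw [← hIeq, Finset.card_sdiff_add_card_eq_card (Finset.subset_univ _), Finset.card_univ]
  have hFvS : (Fv ∪ S).card = Fv.card + S.card := by
    rw [Finset.union_comm, Finset.card_union_of_disjoint hSF]; omega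
  omega
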